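/- arXiv:math/0401057 — 3 statements merged into one kernel-verified Lean document; each statement's English description precedes it below -/
import Mathlib

section
/- For every natural number m and all real numbers x, y, z, one has (x+(m+1)z) · Σ_{n=0}^{m} (-1)^n · C(x+y+nz, m-n) · C(y+n(z+1), n) = z · Σ_{0≤l≤n≤m} (-1)^n · C(n,l) · C(x+l, m-n) · (1+z)^{n+l} · (1-z)^{n-l} + (x-m) · C(x,m). -/
open Finset PowerSeries

/-- Generalized binomial coefficient `C(x, k) = x(x-1)⋯(x-k+1)/k!` for real `x`. -/
noncomputable def gchoose (x : ℝ) (k : ℕ) : ℝ :=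
  (∏ i ∈ Finset.range k, (x - i)) / (Nat.factorial k)

/-- The binomial series `(1+t)^x = Σ C(x,k) t^k` as a formal power series. -/
noncomputable def binomSeries (x : ℝ) : PowerSeries ℝ :=
  PowerSeries.mk fun k => gchoose x k

lemma gchoose_zero (x : ℝ) : gchoose x 0 = 1 := by simp [gchoose]

noncomputable def gpoly (m : ℕ) : Polynomial ℝ :=
  Polynomial.C ((m.factorial : ℝ)⁻¹) * descPochhammer ℝ m

lemma descPochhammer_eval_prod (m : ℕ) (x : ℝ) :
    (descPochhammer ℝ m).eval x = ∏ i ∈ Finset.range m, (x - i) := by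
  induction m with
  | zero => simp
  | succ n ih => rw [descPochhammer_succ_eval, ih, Finset.prod_range_succ]

lemma gpoly_eval (m : ℕ) (x : ℝ) : (gpoly m).eval x = gchoose x m := by
  simp only [gpoly, Polynomial.eval_mul, Polynomial.eval_C, descPochhammer_eval_prod, gchoose]
  rw [div_eq_inv_mul]

lemma gpoly_natDegree (m : ℕ) : (gpoly m).natDegree = m := by
  rw [gpoly, Polynomial.natDegree_C_mul (by positivity), descPochhammer_natDegree]

lemma gpoly_coeff_self (m : ℕ) : (gpoly m).coeff m = (m.factorial : ℝ)⁻¹ := by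
  have h := (monic_descPochhammer ℝ m).leadingCoeff
  rw [Polynomial.leadingCoeff, descPochhammer_natDegree] at h
  rw [gpoly, Polynomial.coeff_C_mul, h, mul_one]

lemma absorb (x : ℝ) (k : ℕ) :
    (x - k) * gchoose x k = (k + 1) * gchoose x (k + 1) := by
  unfold gchoose
  rw [Finset.prod_range_succ, Nat.factorial_succ]
  have h1 : (k.factorial : ℝ) ≠ 0 := by positivity
  push_cast
  field_simp

lemma gchoose_chain (a : ℝ) (n k : ℕ) :
    gchoose a n * gchoose (a - n) k = ((n + k).choose n : ℝ) * gchoose a (n + k) := by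
  unfold gchoose
  have hsplit : (∏ i ∈ Finset.range (n + k), (a - i)) =
      (∏ i ∈ Finset.range n, (a - i)) * ∏ i ∈ Finset.range k, (a - n - i) := by
    rw [Finset.prod_range_add]
    congr 1
    refine Finset.prod_congr rfl fun i _ => ?_
    push_cast; ring
  have hc : ((n + k).choose n : ℝ) * n.factorial * k.factorial = (n + k).factorial := by
    have := Nat.choose_mul_factorial_mul_factorial (Nat.le_add_right n k)
    rw [Nat.add_sub_cancel_left] at this
    exact_mod_cast congrArg (Nat.cast (R := ℝ)) this
  have h1 : (n.factorial : ℝ) ≠ 0 := by positivity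
  have h2 : (k.factorial : ℝ) ≠ 0 := by positivity
  have h3 : ((n + k).factorial : ℝ) ≠ 0 := by positivity
  rw [hsplit]
  field_simp
  linear_combination (-((∏ i ∈ Finset.range n, (a - (i:ℝ))) * ∏ i ∈ Finset.range k, (a - n - i))) * hc

lemma gchoose_succ (x : ℝ) (k : ℕ) :
    gchoose x (k + 1) = (x - k) * gchoose x k / (k + 1) := by
  rw [absorb]
  field_simp

lemma gchoose_natCast (N k : ℕ) : gchoose (N : ℝ) k = (N.choose k : ℝ) := by
  induction k with
  | zero => simp [gchoose_zero]
  | succ k ih =>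
    rw [gchoose_succ, ih]
    rcases le_or_gt k N with h | h
    · have h2 := Nat.choose_succ_right_eq N k
      have hcast : ((N - k : ℕ) : ℝ) = (N : ℝ) - k := by
        push_cast [h]; ring
      have h3 : (N.choose (k+1) : ℝ) * (k+1) = (N.choose k : ℝ) * ((N:ℝ) - k) := by
        rw [← hcast]; exact_mod_cast congrArg (Nat.cast (R := ℝ)) h2
      have : ((k:ℝ)+1) ≠ 0 := by positivity
      field_simp
      linarith [h3]
    · rw [Nat.choose_eq_zero_of_lt h, Nat.choose_eq_zero_of_lt (by omega)]
      have : (N:ℝ) - (N:ℕ) = 0 := by simp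
      -- N.choose k = 0 since k > N
      simp

lemma poly_eq_of_eval_nat {p q : Polynomial ℝ}
    (h : ∀ N : ℕ, p.eval (N : ℝ) = q.eval (N : ℝ)) : p = q := by
  have hz : p - q = 0 := by
    apply Polynomial.eq_zero_of_infinite_isRoot
    apply Set.infinite_of_injective_forall_mem (f := (Nat.cast : ℕ → ℝ))
      Nat.cast_injective
    intro N
    simp only [Set.mem_setOf_eq, Polynomial.IsRoot, Polynomial.eval_sub, h N, sub_self]
  linear_combination (norm := ring_nf) hz

lemma nat_vandermonde (A B m : ℕ) :
    (((A + B).choose m : ℕ) : ℝ) =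
      ∑ j ∈ range (m + 1), (A.choose j : ℝ) * (B.choose (m - j) : ℝ) := by
  have h := Nat.add_choose_eq A B m
  rw [Finset.Nat.sum_antidiagonal_eq_sum_range_succ_mk] at h
  rw [h]
  push_cast
  rfl

lemma gchoose_add (a b : ℝ) (m : ℕ) :
    gchoose (a + b) m = ∑ j ∈ range (m + 1), gchoose a j * gchoose b (m - j) := by
  have stageA : ∀ (B : ℕ) (a : ℝ), gchoose (a + B) m
      = ∑ j ∈ range (m + 1), gchoose a j * gchoose (B : ℝ) (m - j) := by
    intro B a
    have hpoly : Polynomial.taylor (B : ℝ) (gpoly m)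
        = ∑ j ∈ range (m + 1), Polynomial.C ((B.choose (m - j) : ℝ)) * gpoly j := by
      apply poly_eq_of_eval_nat
      intro N
      rw [Polynomial.taylor_eval]
      simp only [Polynomial.eval_finset_sum, Polynomial.eval_mul, Polynomial.eval_C, gpoly_eval]
      have : ((N : ℝ) + B) = ((N + B : ℕ) : ℝ) := by push_cast; ring
      rw [this, gchoose_natCast, nat_vandermonde]
      refine Finset.sum_congr rfl fun j _ => ?_
      rw [gchoose_natCast, mul_comm]
    have := congrArg (Polynomial.eval a) hpoly
    rw [Polynomial.taylor_eval] at this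
    simp only [Polynomial.eval_finset_sum, Polynomial.eval_mul, Polynomial.eval_C,
      gpoly_eval] at this
    rw [this]
    refine Finset.sum_congr rfl fun j _ => ?_
    rw [gchoose_natCast, mul_comm]
  -- stage B : vary b
  have hpoly2 : Polynomial.taylor a (gpoly m)
      = ∑ j ∈ range (m + 1), Polynomial.C (gchoose a j) * gpoly (m - j) := by
    apply poly_eq_of_eval_nat
    intro B
    rw [Polynomial.taylor_eval]
    simp only [Polynomial.eval_finset_sum, Polynomial.eval_mul, Polynomial.eval_C, gpoly_eval]
    rw [add_comm (B:ℝ) a]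
    exact stageA B a
  have := congrArg (Polynomial.eval b) hpoly2
  rw [Polynomial.taylor_eval] at this
  simp only [Polynomial.eval_finset_sum, Polynomial.eval_mul, Polynomial.eval_C,
    gpoly_eval] at this
  rw [add_comm b a] at this
  exact this

/-- Pascal-style rearrangement of an alternating sum. -/
lemma alt_sum_step (m : ℕ) (f : ℕ → ℝ) :
    ∑ n ∈ range (m + 2), (-1 : ℝ) ^ n * ((m+1).choose n : ℝ) * f n
      = ∑ n ∈ range (m + 1), (-1 : ℝ) ^ n * (m.choose n : ℝ) * (f n - f (n + 1)) := by
  have L : ∑ n ∈ range (m + 2), (-1 : ℝ) ^ n * ((m+1).choose n : ℝ) * f n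
      = f 0 + ∑ i ∈ range (m + 1), (-1 : ℝ) ^ (i+1) * (((m.choose i : ℕ) : ℝ)
          + ((m.choose (i+1) : ℕ) : ℝ)) * f (i+1) := by
    rw [Finset.sum_range_succ' _ (m + 1)]
    simp only [pow_zero, Nat.choose_zero_right, Nat.cast_one, one_mul, mul_one]
    rw [add_comm]
    congr 1
    refine Finset.sum_congr rfl fun i _ => ?_
    rw [Nat.choose_succ_succ]
    push_cast
    ring
  rw [L]
  have R : ∑ n ∈ range (m + 1), (-1 : ℝ) ^ n * (m.choose n : ℝ) * (f n - f (n + 1))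
      = (∑ n ∈ range (m + 1), (-1 : ℝ) ^ n * (m.choose n : ℝ) * f n)
        - ∑ n ∈ range (m + 1), (-1 : ℝ) ^ n * (m.choose n : ℝ) * f (n + 1) := by
    rw [← Finset.sum_sub_distrib]
    refine Finset.sum_congr rfl fun n _ => by ring
  rw [R]
  have L2 : ∑ n ∈ range (m + 1), (-1 : ℝ) ^ n * (m.choose n : ℝ) * f n
      = f 0 + ∑ i ∈ range m, (-1 : ℝ) ^ (i+1) * (m.choose (i+1) : ℝ) * f (i+1) := by
    rw [Finset.sum_range_succ' _ m]
    simp only [pow_zero, Nat.choose_zero_right, Nat.cast_one, one_mul, mul_one]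
    rw [add_comm]
  rw [L2]
  have hext : ∑ i ∈ range (m+1), (-1 : ℝ) ^ (i+1) * (m.choose (i+1) : ℝ) * f (i+1)
      = ∑ i ∈ range m, (-1 : ℝ) ^ (i+1) * (m.choose (i+1) : ℝ) * f (i+1) := by
    rw [Finset.sum_range_succ, Nat.choose_succ_self]
    simp
  have expand : ∑ i ∈ range (m + 1), (-1 : ℝ) ^ (i+1) * (((m.choose i : ℕ) : ℝ)
          + ((m.choose (i+1) : ℕ) : ℝ)) * f (i+1)
      = (∑ i ∈ range (m + 1), (-1 : ℝ) ^ (i+1) * (m.choose i : ℝ) * f (i+1))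
        + ∑ i ∈ range (m + 1), (-1 : ℝ) ^ (i+1) * (m.choose (i+1) : ℝ) * f (i+1) := by
    rw [← Finset.sum_add_distrib]
    refine Finset.sum_congr rfl fun n _ => by ring
  rw [expand, hext]
  have : ∑ i ∈ range (m + 1), (-1 : ℝ) ^ (i+1) * (m.choose i : ℝ) * f (i+1)
      = - ∑ i ∈ range (m + 1), (-1 : ℝ) ^ i * (m.choose i : ℝ) * f (i+1) := by
    rw [← Finset.sum_neg_distrib]
    refine Finset.sum_congr rfl fun n _ => by ring
  rw [this]
  ring

lemma fd (m : ℕ) : ∀ p : Polynomial ℝ, p.natDegree ≤ m → ∀ (y h : ℝ),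
    ∑ n ∈ range (m + 1), (-1 : ℝ) ^ n * (m.choose n : ℝ) * p.eval (y + n * h)
      = (-h) ^ m * (m.factorial : ℝ) * p.coeff m := by
  induction m with
  | zero =>
    intro p hp y h
    simp only [range_one, sum_singleton, pow_zero, Nat.choose_zero_right, Nat.cast_one,
      Nat.factorial_zero, one_mul, mul_one, Nat.cast_zero, zero_mul, add_zero]
    conv_lhs => rw [Polynomial.eq_C_of_natDegree_le_zero hp]
    simp
  | succ m ih =>
    intro p hp y h
    set q := p - Polynomial.taylor h p with hqdef
    have hqeval : ∀ t : ℝ, q.eval t = p.eval t - p.eval (t + h) := by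
      intro t
      simp [hqdef, Polynomial.taylor_eval]
    -- coefficient m+1 of taylor h p equals coeff m+1 of p
    have htay : ∀ k : ℕ, (Polynomial.taylor h p).coeff k = (Polynomial.hasseDeriv k p).eval h :=
      fun k => Polynomial.taylor_coeff h p k
    have hh1 : Polynomial.hasseDeriv (m+1) p = Polynomial.C (p.coeff (m+1)) := by
      ext n
      rw [Polynomial.hasseDeriv_coeff]
      cases n with
      | zero => simp
      | succ n =>
        rw [Polynomial.coeff_eq_zero_of_natDegree_lt (lt_of_le_of_lt hp (by omega)),
          Polynomial.coeff_C]
        simp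
    have hq_top : q.coeff (m+1) = 0 := by
      simp [hqdef, htay, hh1]
    have hqdeg : q.natDegree ≤ m := by
      rw [Polynomial.natDegree_le_iff_coeff_eq_zero]
      intro N hN
      rcases Nat.lt_or_ge (m+1) N with h2 | h2
      · have : p.natDegree < N := lt_of_le_of_lt hp h2
        simp [hqdef, Polynomial.coeff_eq_zero_of_natDegree_lt this,
          Polynomial.coeff_eq_zero_of_natDegree_lt
            (lt_of_le_of_lt (le_of_eq (Polynomial.natDegree_taylor p h)) this)]
      · have : N = m + 1 := by omega
        rw [this]; exact hq_top
    -- coeff m of q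
    have hh2 : Polynomial.hasseDeriv m p
        = Polynomial.C (p.coeff m) + Polynomial.C ((m+1 : ℝ) * p.coeff (m+1)) * Polynomial.X := by
      ext n
      rw [Polynomial.hasseDeriv_coeff]
      match n with
      | 0 => simp
      | 1 =>
        simp only [Polynomial.coeff_add, Polynomial.coeff_C, Polynomial.coeff_C_mul,
          Polynomial.coeff_X_one, if_neg (Nat.one_ne_zero), mul_one, zero_add]
        have hc : (1+m).choose m = m+1 := by
          rw [Nat.add_comm]; exact Nat.choose_succ_self_right m
        rw [hc, Nat.add_comm 1 m]
        push_cast; ring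
      | (n+2) =>
        rw [Polynomial.coeff_eq_zero_of_natDegree_lt (lt_of_le_of_lt hp (by omega))]
        simp only [Polynomial.coeff_add, Polynomial.coeff_C, Polynomial.coeff_C_mul]
        rw [Polynomial.coeff_X]
        simp
    have hqm : q.coeff m = -(((m:ℝ)+1) * h * p.coeff (m+1)) := by
      simp only [hqdef, Polynomial.coeff_sub, htay, hh2]
      simp only [Polynomial.eval_add, Polynomial.eval_mul, Polynomial.eval_C, Polynomial.eval_X]
      ring
    have step2 : ∑ n ∈ range (m + 2), (-1:ℝ)^n * ((m+1).choose n : ℝ) * p.eval (y + n*h)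
        = ∑ n ∈ range (m+1), (-1:ℝ)^n * (m.choose n : ℝ) * q.eval (y + n*h) := by
      rw [alt_sum_step m (fun n => p.eval (y + n * h))]
      refine Finset.sum_congr rfl fun n _ => ?_
      rw [hqeval]
      have harg : y + ((n:ℝ)+1)*h = y + (n:ℝ)*h + h := by ring
      push_cast
      rw [harg]
    rw [step2, ih q hqdeg y h, hqm, Nat.factorial_succ]
    push_cast
    ring

lemma fd_gchoose (r : ℕ) (y h : ℝ) :
    ∑ n ∈ Finset.range (r+1), (-1:ℝ)^n * (r.choose n : ℝ) * gchoose (y + n*h) r = (-h)^r := by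
  have hfd := fd r (gpoly r) (le_of_eq (gpoly_natDegree r)) y h
  simp only [gpoly_eval] at hfd
  rw [hfd, gpoly_coeff_self, mul_assoc, mul_inv_cancel₀ (by positivity), mul_one]

lemma lsum (n s : ℕ) (z : ℝ) :
    ∑ l ∈ range (n + 1), (n.choose l : ℝ) * (l.choose s : ℝ) * (1+z)^(n+l) * (1-z)^(n-l)
      = (n.choose s : ℝ) * (1+z)^(n+s) * 2^(n-s) := by
  rcases le_or_gt s n with hs | hs
  · have hsplit : range (n+1) = Finset.Ico 0 (n+1) := by
      rw [Finset.range_eq_Ico]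
    rw [hsplit, ← Finset.sum_Ico_consecutive _ (Nat.zero_le s) (by omega)]
    have hzero : ∑ l ∈ Finset.Ico 0 s, (n.choose l : ℝ) * (l.choose s : ℝ)
        * (1+z)^(n+l) * (1-z)^(n-l) = 0 := by
      apply Finset.sum_eq_zero
      intro l hl
      rw [Finset.mem_Ico] at hl
      rw [Nat.choose_eq_zero_of_lt hl.2]
      simp
    rw [hzero, zero_add, Finset.sum_Ico_eq_sum_range]
    have hn1 : n + 1 - s = (n - s) + 1 := by omega
    rw [hn1]
    have hterm : ∀ t ∈ range ((n-s)+1), (n.choose (s+t) : ℝ) * ((s+t).choose s : ℝ)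
        * (1+z)^(n+(s+t)) * (1-z)^(n-(s+t))
        = ((n.choose s : ℝ) * (1+z)^(n+s)) * (((n-s).choose t : ℝ) * (1+z)^t * (1-z)^((n-s)-t)) := by
      intro t ht
      rw [Finset.mem_range] at ht
      have h1 : n.choose (s+t) * (s+t).choose s = n.choose s * (n-s).choose t := by
        have := Nat.choose_mul (n := n) (k := s + t) (s := s) (by omega)
        simpa using this
      have h2 : (n.choose (s+t) : ℝ) * ((s+t).choose s : ℝ) = (n.choose s : ℝ) * ((n-s).choose t : ℝ) := by
        exact_mod_cast congrArg (Nat.cast (R := ℝ)) h1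
      have h3 : n + (s + t) = (n + s) + t := by omega
      have h4 : n - (s + t) = (n - s) - t := by omega
      rw [h3, h4, pow_add]
      calc (n.choose (s+t) : ℝ) * ((s+t).choose s : ℝ) * ((1+z)^(n+s) * (1+z)^t) * (1-z)^((n-s)-t)
          = ((n.choose (s+t) : ℝ) * ((s+t).choose s : ℝ)) * ((1+z)^(n+s) * ((1+z)^t * (1-z)^((n-s)-t))) := by ring
        _ = ((n.choose s : ℝ) * ((n-s).choose t : ℝ)) * ((1+z)^(n+s) * ((1+z)^t * (1-z)^((n-s)-t))) := by rw [h2]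
        _ = _ := by ring
    rw [Finset.sum_congr rfl hterm, ← Finset.mul_sum]
    have hbin : ∑ t ∈ range ((n-s)+1), ((n-s).choose t : ℝ) * (1+z)^t * (1-z)^((n-s)-t)
        = (2:ℝ)^(n-s) := by
      have := add_pow (1+z) (1-z) (n-s)
      have h2 : (1+z) + (1-z) = (2:ℝ) := by ring
      rw [h2] at this
      rw [this]
      refine Finset.sum_congr rfl fun t _ => by ring
    rw [hbin]
  · rw [Nat.choose_eq_zero_of_lt hs]
    simp only [Nat.cast_zero, zero_mul]
    apply Finset.sum_eq_zero
    intro l hl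
    rw [Finset.mem_range] at hl
    rw [Nat.choose_eq_zero_of_lt (by omega : l < s)]
    simp

noncomputable def Fs (r : ℕ) : ℝ :=
  ∑ n ∈ range (r+1), (-1:ℝ)^n * (n.choose (r-n) : ℝ) * 2^(n-(r-n))

lemma Frec (r : ℕ) : Fs (r+2) = -2 * Fs (r+1) - Fs r := by
  have hB : ∑ t ∈ range (r+1), (-1:ℝ)^t * (t.choose ((r-t)+1) : ℝ) * 2^(t-(r-t))
      = 2 * Fs (r+1) - (-1:ℝ)^(r+1) * 2^(r+2) := by
    have hF : Fs (r+1) = (∑ t ∈ range (r+1), (-1:ℝ)^t * (t.choose ((r+1)-t) : ℝ)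
        * 2^(t-((r+1)-t))) + (-1:ℝ)^(r+1) * 2^(r+1) := by
      rw [Fs, Finset.sum_range_succ, Nat.sub_self, Nat.sub_zero, Nat.choose_zero_right,
        Nat.cast_one, mul_one]
    have hterm : ∀ t ∈ range (r+1), (-1:ℝ)^t * (t.choose ((r-t)+1) : ℝ) * 2^(t-(r-t))
        = 2 * ((-1:ℝ)^t * (t.choose ((r+1)-t) : ℝ) * 2^(t-((r+1)-t))) := by
      intro t ht
      rw [Finset.mem_range] at ht
      have h1 : (r+1)-t = (r-t)+1 := by omega
      rw [h1]
      rcases le_or_gt ((r-t)+1) t with h2 | h2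
      · have h3 : t - (r-t) = (t - ((r-t)+1)) + 1 := by omega
        rw [h3, pow_succ]
        ring
      · rw [Nat.choose_eq_zero_of_lt h2]
        simp
    rw [Finset.sum_congr rfl hterm, ← Finset.mul_sum]
    have : ∑ t ∈ range (r+1), (-1:ℝ)^t * (t.choose ((r+1)-t) : ℝ) * 2^(t-((r+1)-t))
        = Fs (r+1) - (-1:ℝ)^(r+1) * 2^(r+1) := by
      rw [hF]; ring
    rw [this]
    ring
  have expand : Fs (r+2) = (∑ t ∈ range (r+1),
      ((-((-1:ℝ)^t * (t.choose (r-t) : ℝ) * 2^(t-(r-t))))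
        + (-((-1:ℝ)^t * (t.choose ((r-t)+1) : ℝ) * 2^(t-(r-t))))))
      + 0 + (-1:ℝ)^r * 2^(r+2) := by
    rw [Fs]
    have h3 : r + 2 + 1 = (r + 2) + 1 := rfl
    rw [Finset.sum_range_succ, Finset.sum_range_succ']
    congr 1
    · congr 1
      · refine Finset.sum_congr rfl fun t ht => ?_
        rw [Finset.mem_range] at ht
        have h1 : (r+2)-(t+1) = (r-t)+1 := by omega
        have h2 : (t+1)-((r-t)+1) = t - (r-t) := by omega
        rw [h1, h2, Nat.choose_succ_succ]
        push_cast
        ring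
      · rw [Nat.choose_eq_zero_of_lt (by omega : 0 < (r+2)-0)]
        simp
    · rw [Nat.sub_self, Nat.sub_zero, Nat.choose_zero_right]
      have : (-1:ℝ)^(r+2) = (-1:ℝ)^r := by
        rw [pow_add]; norm_num
      rw [this]
      simp
  rw [expand, Finset.sum_add_distrib]
  have e1 : ∑ t ∈ range (r+1), -((-1:ℝ)^t * (t.choose (r-t) : ℝ) * 2^(t-(r-t))) = -Fs r := by
    rw [Fs, ← Finset.sum_neg_distrib]
  have e2 : ∑ t ∈ range (r+1), -((-1:ℝ)^t * (t.choose ((r-t)+1) : ℝ) * 2^(t-(r-t)))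
      = -(2 * Fs (r+1) - (-1:ℝ)^(r+1) * 2^(r+2)) := by
    rw [← hB, ← Finset.sum_neg_distrib]
  rw [e1, e2]
  have : (-1:ℝ)^(r+1) = -(-1:ℝ)^r := by rw [pow_succ]; ring
  rw [this]
  ring

lemma Fval (r : ℕ) : Fs r = (-1:ℝ)^r * (r+1) := by
  induction r using Nat.strong_induction_on with
  | _ r ih =>
    match r with
    | 0 => simp [Fs]
    | 1 =>
      rw [Fs]
      simp [Finset.sum_range_succ]
      norm_num
    | (r+2) =>
      rw [Frec, ih (r+1) (by omega), ih r (by omega)]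
      have h1 : (-1:ℝ)^(r+1) = -(-1:ℝ)^r := by rw [pow_succ]; ring
      have h2 : (-1:ℝ)^(r+2) = (-1:ℝ)^r := by rw [pow_add]; norm_num
      rw [h1, h2]
      push_cast
      ring

lemma swap_sum (m : ℕ) (f : ℕ → ℕ → ℝ) :
    ∑ n ∈ range (m+1), ∑ i ∈ range ((m-n)+1), f n i
      = ∑ i ∈ range (m+1), ∑ n ∈ range ((m-i)+1), f n i :=
  Finset.sum_comm' (by intro n i; simp only [Finset.mem_range]; omega)

lemma lemA (m : ℕ) (x y z : ℝ) :
    ∑ n ∈ range (m+1), (-1:ℝ)^n * gchoose (x + y + n*z) (m-n) * gchoose (y + n*(z+1)) n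
      = ∑ j ∈ range (m+1), gchoose x j * (-(1+z))^(m-j) := by
  have step1 : ∀ n ∈ range (m+1),
      (-1:ℝ)^n * gchoose (x + y + n*z) (m-n) * gchoose (y + n*(z+1)) n
        = ∑ i ∈ range ((m-n)+1),
            (-1:ℝ)^n * (((m-i).choose n : ℕ) : ℝ) * gchoose (y + n*(z+1)) (m-i) * gchoose x i := by
    intro n hn
    rw [Finset.mem_range] at hn
    have harg : x + y + (n:ℝ)*z = x + (y + n*z) := by ring
    rw [harg, gchoose_add, Finset.mul_sum, Finset.sum_mul]
    refine Finset.sum_congr rfl fun i hi => ?_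
    rw [Finset.mem_range] at hi
    have hchain : gchoose (y + n*(z+1)) n * gchoose (y + n*z) ((m-n)-i)
        = (((m-i).choose n : ℕ) : ℝ) * gchoose (y + n*(z+1)) (m-i) := by
      have hsub : y + (n:ℝ)*z = (y + n*(z+1)) - n := by ring
      rw [hsub, gchoose_chain]
      have h2 : n + ((m-n)-i) = m - i := by omega
      rw [h2]
    calc (-1:ℝ)^n * (gchoose x i * gchoose (y + n*z) ((m-n)-i)) * gchoose (y + n*(z+1)) n
        = (-1:ℝ)^n * (gchoose (y + n*(z+1)) n * gchoose (y + n*z) ((m-n)-i)) * gchoose x i := by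
          ring
      _ = _ := by rw [hchain]; ring
  rw [Finset.sum_congr rfl step1, swap_sum m
    (fun n i => (-1:ℝ)^n * (((m-i).choose n : ℕ) : ℝ) * gchoose (y + n*(z+1)) (m-i) * gchoose x i)]
  refine Finset.sum_congr rfl fun i hi => ?_
  have : ∑ n ∈ range ((m-i)+1),
      (-1:ℝ)^n * (((m-i).choose n : ℕ) : ℝ) * gchoose (y + n*(z+1)) (m-i) * gchoose x i
      = (∑ n ∈ range ((m-i)+1),
          (-1:ℝ)^n * (((m-i).choose n : ℕ) : ℝ) * gchoose (y + n*(z+1)) (m-i)) * gchoose x i := by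
    rw [Finset.sum_mul]
  rw [this, fd_gchoose (m-i) y (z+1)]
  have : (-(z+1) : ℝ) = -(1+z) := by ring
  rw [this, mul_comm]

lemma lemB (m : ℕ) (x z : ℝ) :
    ∑ n ∈ range (m + 1), ∑ l ∈ range (n + 1),
        (-1 : ℝ) ^ n * (n.choose l : ℝ) * gchoose (x + l) (m - n) *
          (1 + z) ^ (n + l) * (1 - z) ^ (n - l)
      = ∑ i ∈ range (m+1), gchoose x i * (((m-i) : ℕ) + 1 : ℝ) * (-(1+z))^(m-i) := by
  have step1 : ∀ n ∈ range (m+1),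
      ∑ l ∈ range (n + 1), (-1 : ℝ) ^ n * (n.choose l : ℝ) * gchoose (x + l) (m - n) *
          (1 + z) ^ (n + l) * (1 - z) ^ (n - l)
      = ∑ i ∈ range ((m-n)+1), (-1:ℝ)^n * (n.choose ((m-n)-i) : ℝ)
          * (1+z)^(n+((m-n)-i)) * 2^(n-((m-n)-i)) * gchoose x i := by
    intro n hn
    have expand : ∀ l ∈ range (n+1),
        (-1 : ℝ) ^ n * (n.choose l : ℝ) * gchoose (x + l) (m - n) *
          (1 + z) ^ (n + l) * (1 - z) ^ (n - l)
        = ∑ i ∈ range ((m-n)+1), gchoose x i *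
            ((-1:ℝ)^n * ((n.choose l : ℝ) * (l.choose ((m-n)-i) : ℝ)
              * (1+z)^(n+l) * (1-z)^(n-l))) := by
      intro l hl
      rw [gchoose_add x (l:ℝ) (m-n), Finset.mul_sum, Finset.sum_mul, Finset.sum_mul]
      refine Finset.sum_congr rfl fun i hi => ?_
      rw [gchoose_natCast]
      ring
    rw [Finset.sum_congr rfl expand, Finset.sum_comm]
    refine Finset.sum_congr rfl fun i hi => ?_
    rw [← Finset.mul_sum]
    have : ∑ l ∈ range (n+1), (-1:ℝ)^n * ((n.choose l : ℝ) * (l.choose ((m-n)-i) : ℝ)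
              * (1+z)^(n+l) * (1-z)^(n-l))
        = (-1:ℝ)^n * ∑ l ∈ range (n+1), (n.choose l : ℝ) * (l.choose ((m-n)-i) : ℝ)
              * (1+z)^(n+l) * (1-z)^(n-l) := by
      rw [Finset.mul_sum]
    rw [this, lsum n ((m-n)-i) z]
    ring
  rw [Finset.sum_congr rfl step1, swap_sum m (fun n i => (-1:ℝ)^n * (n.choose ((m-n)-i) : ℝ)
          * (1+z)^(n+((m-n)-i)) * 2^(n-((m-n)-i)) * gchoose x i)]
  refine Finset.sum_congr rfl fun i hi => ?_
  rw [Finset.mem_range] at hi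
  have per_n : ∀ n ∈ range ((m-i)+1), (-1:ℝ)^n * (n.choose ((m-n)-i) : ℝ)
          * (1+z)^(n+((m-n)-i)) * 2^(n-((m-n)-i)) * gchoose x i
      = ((1+z)^(m-i) * gchoose x i) * ((-1:ℝ)^n * (n.choose ((m-i)-n) : ℝ) * 2^(n-((m-i)-n))) := by
    intro n hn
    rw [Finset.mem_range] at hn
    have h1 : (m-n)-i = (m-i)-n := by omega
    have h2 : n + ((m-i)-n) = m-i := by omega
    rw [h1, h2]
    ring
  rw [Finset.sum_congr rfl per_n, ← Finset.mul_sum]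
  have hF : ∑ n ∈ range ((m-i)+1), ((-1:ℝ)^n * (n.choose ((m-i)-n) : ℝ) * 2^(n-((m-i)-n)))
      = Fs (m-i) := rfl
  rw [hF, Fval]
  have hnp : (-(1+z):ℝ)^(m-i) = (-1:ℝ)^(m-i) * (1+z)^(m-i) := by
    rw [neg_pow]
  rw [hnp]
  ring

lemma telescope (m : ℕ) (x z : ℝ) :
    ∑ j ∈ range (m+1), gchoose x j * (-(1+z))^(m-j) * (x + z*j)
      = (x - m) * gchoose x m := by
  have key := Finset.sum_range_sub
    (fun j => (j:ℝ) * gchoose x j * (-(1+z))^((m+1)-j)) (m+1)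
  have per : ∀ j ∈ range (m+1),
      ((j:ℝ)+1) * gchoose x (j+1) * (-(1+z))^((m+1)-(j+1))
        - (j:ℝ) * gchoose x j * (-(1+z))^((m+1)-j)
      = gchoose x j * (-(1+z))^(m-j) * (x + z*j) := by
    intro j hj
    rw [Finset.mem_range] at hj
    have h1 : (m+1)-(j+1) = m-j := by omega
    have h2 : (m+1)-j = (m-j)+1 := by omega
    have habs : ((j:ℝ)+1) * gchoose x (j+1) = (x - j) * gchoose x j := by
      rw [← absorb]
    rw [h1, h2, habs, pow_succ]
    ring
  have key2 : ∑ j ∈ range (m+1), gchoose x j * (-(1+z))^(m-j) * (x + z*j)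
      = ((m:ℝ)+1) * gchoose x (m+1) * (-(1+z))^((m+1)-(m+1))
        - (0:ℝ) * gchoose x 0 * (-(1+z))^((m+1)-0) := by
    rw [← Finset.sum_congr rfl per]
    convert key using 2 <;> push_cast <;> ring
  rw [key2]
  simp only [Nat.sub_self, pow_zero, mul_one, zero_mul, sub_zero]
  linear_combination (-1 : ℝ) * absorb x m

theorem sun_wu_extension (m : ℕ) (x y z : ℝ) :
    (x + (m + 1) * z) *
        ∑ n ∈ Finset.range (m + 1),
          (-1 : ℝ) ^ n * gchoose (x + y + n * z) (m - n) * gchoose (y + n * (z + 1)) n =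
      z * ∑ n ∈ Finset.range (m + 1), ∑ l ∈ Finset.range (n + 1),
            (-1 : ℝ) ^ n * (n.choose l : ℝ) * gchoose (x + l) (m - n) *
              (1 + z) ^ (n + l) * (1 - z) ^ (n - l) +
        (x - m) * gchoose x m := by
  rw [lemA m x y z, lemB m x z, ← telescope m x z, Finset.mul_sum, Finset.mul_sum,
    ← sub_eq_iff_eq_add, ← Finset.sum_sub_distrib]
  refine Finset.sum_congr rfl fun j hj => ?_
  rw [Finset.mem_range] at hj
  have hc : ((m - j : ℕ) : ℝ) = (m : ℝ) - j := by
    push_cast [Nat.cast_sub (by omega : j ≤ m)]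
    ring
  rw [hc]
  ring
end

section
/- For every natural number m and all real numbers x, y, z, one has (x+(m+1)z+1) · Σ_{n=0}^{m} (-1)^n · C(x+y+nz, m-n) · C(y+n(z+1), n) = (z+1) · Σ_{0≤l≤n≤m} (-1)^n · C(n,l) · C(x+l+1, m-n) · (1+z)^{n+l} · (1-z)^{n-l} + (x-m) · C(x,m). -/
open Finset PowerSeries

namespace SunWu

lemma descPoch (x : ℝ) (n : ℕ) : (descPochhammer ℤ n).smeval x = ∏ i ∈ Finset.range n, (x - i) := by
  induction n with
  | zero => simp [descPochhammer_zero, Polynomial.smeval_one]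
  | succ n ih =>
    rw [descPochhammer_succ_right, Polynomial.smeval_mul, ih, prod_range_succ,
      Polynomial.smeval_sub, Polynomial.smeval_X, Polynomial.smeval_natCast]
    ring

lemma gchoose_eq (x : ℝ) (k : ℕ) : gchoose x k = Ring.choose x k := by
  have h := Ring.descPochhammer_eq_factorial_smul_choose (R := ℝ) x k
  rw [descPoch] at h
  rw [gchoose, h, nsmul_eq_mul, mul_comm, mul_div_assoc, div_self, mul_one]
  exact_mod_cast Nat.factorial_ne_zero k

lemma gchoose_vandermonde (a b : ℝ) (n : ℕ) :
    gchoose (a + b) n = ∑ k ∈ Finset.range (n + 1), gchoose a k * gchoose b (n - k) := by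
  rw [gchoose_eq, Ring.add_choose_eq _ (Commute.all a b)]
  rw [Finset.Nat.sum_antidiagonal_eq_sum_range_succ (fun i j => Ring.choose a i * Ring.choose b j)]
  exact Finset.sum_congr rfl fun k _ => by rw [gchoose_eq, gchoose_eq]

lemma gchoose_natCast (n k : ℕ) : gchoose (n : ℝ) k = (n.choose k : ℝ) := by
  rw [gchoose_eq]
  exact_mod_cast Ring.choose_natCast (R := ℝ) n k

@[simp] lemma gchoose_zero (x : ℝ) : gchoose x 0 = 1 := by simp [gchoose]

@[simp] lemma gchoose_zero_left (k : ℕ) : gchoose (0 : ℝ) k = if k = 0 then 1 else 0 := by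
  have := gchoose_natCast 0 k
  rw [Nat.cast_zero] at this
  rw [this]
  cases k with
  | zero => simp
  | succ k => simp [Nat.choose_eq_zero_of_lt (Nat.succ_pos k)]

/-- absorption: `(k+1) C(a, k+1) = (a - k) C(a, k)` -/
lemma gchoose_absorb (a : ℝ) (k : ℕ) :
    ((k : ℝ) + 1) * gchoose a (k + 1) = (a - k) * gchoose a k := by
  rw [gchoose, gchoose, prod_range_succ, Nat.factorial_succ]
  have h1 : (Nat.factorial k : ℝ) ≠ 0 := by exact_mod_cast Nat.factorial_ne_zero k
  have h2 : ((k + 1 : ℕ) : ℝ) ≠ 0 := by positivity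
  field_simp
  push_cast; ring

/-- absorption': `(k+1) C(a, k+1) = a C(a-1, k)` -/
lemma gchoose_absorb' (a : ℝ) (k : ℕ) :
    ((k : ℝ) + 1) * gchoose a (k + 1) = a * gchoose (a - 1) k := by
  rw [gchoose, gchoose, prod_range_succ', Nat.factorial_succ]
  have h1 : (Nat.factorial k : ℝ) ≠ 0 := by exact_mod_cast Nat.factorial_ne_zero k
  have h2 : ((k + 1 : ℕ) : ℝ) ≠ 0 := by positivity
  have h3 : ∀ i ∈ Finset.range k, a - ((i+1 : ℕ) : ℝ) = (a - 1) - ↑i := by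
    intro i _; push_cast; ring
  rw [Finset.prod_congr rfl h3]
  push_cast
  field_simp
  ring

/-- Pascal: `C(a+1, k+1) = C(a, k+1) + C(a, k)` -/
lemma gchoose_pascal (a : ℝ) (k : ℕ) :
    gchoose (a + 1) (k + 1) = gchoose a (k + 1) + gchoose a k := by
  rw [gchoose, gchoose, gchoose, prod_range_succ', prod_range_succ]
  have h3 : ∀ i ∈ Finset.range k, a + 1 - ((i+1 : ℕ) : ℝ) = a - ↑i := by
    intro i _; push_cast; ring
  rw [Finset.prod_congr rfl h3, Nat.factorial_succ]
  have h1 : (Nat.factorial k : ℝ) ≠ 0 := by exact_mod_cast Nat.factorial_ne_zero k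
  have h2 : ((k + 1 : ℕ) : ℝ) ≠ 0 := by positivity
  push_cast
  field_simp
  ring

lemma gchoose_one (x : ℝ) : gchoose x 1 = x := by simp [gchoose]

noncomputable def Rr (z d : ℝ) (j : ℕ) : ℝ := ∑ i ∈ range (j+1), (-(z+1))^i * gchoose d (j-i)
noncomputable def Uu (z d : ℝ) (j : ℕ) : ℝ :=
  ∑ s ∈ range (j+1), ((s:ℝ)+1) * (-(z+1))^s * gchoose d (j-s)
noncomputable def TT (z d : ℝ) (j : ℕ) : ℝ := ∑ i ∈ range j, (-(z+1))^(i+1) * Rr z d (j-1-i)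
noncomputable def Ncl (z u d : ℝ) (j : ℕ) : ℝ :=
  ∑ i ∈ range j, (-1:ℝ)^(i+1) * (z+1)^i * (u+((i:ℝ)+1)*z+1) * Rr z d (j-1-i)

@[simp] lemma Rr_zero (z d : ℝ) : Rr z d 0 = 1 := by simp [Rr]
@[simp] lemma Uu_zero (z d : ℝ) : Uu z d 0 = 1 := by simp [Uu]
@[simp] lemma Ncl_zero (z u d : ℝ) : Ncl z u d 0 = 0 := by simp [Ncl]

lemma Rr_succ (z d : ℝ) (j : ℕ) :
    Rr z d (j+1) = gchoose d (j+1) - (z+1) * Rr z d j := by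
  rw [Rr, Finset.sum_range_succ']
  have e1 : ∀ x ∈ range (j+1), (-(z+1))^(x+1) * gchoose d (j+1-(x+1))
      = -(z+1) * ((-(z+1))^x * gchoose d (j-x)) := by
    intro x _
    have : j+1-(x+1) = j-x := by omega
    rw [this]; ring
  rw [Finset.sum_congr rfl e1, ← Finset.mul_sum, ← Rr]
  simp; ring

lemma Uu_succ (z d : ℝ) (j : ℕ) :
    Uu z d (j+1) = gchoose d (j+1) - (z+1) * Uu z d j - (z+1) * Rr z d j := by
  rw [Uu, Finset.sum_range_succ']
  have e1 : ∀ x ∈ range (j+1), (((x+1:ℕ):ℝ)+1) * (-(z+1))^(x+1) * gchoose d (j+1-(x+1))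
      = -(z+1) * (((x:ℝ)+1) * (-(z+1))^x * gchoose d (j-x)) + -(z+1) * ((-(z+1))^x * gchoose d (j-x)) := by
    intro x _
    have : j+1-(x+1) = j-x := by omega
    rw [this]; push_cast; ring
  rw [Finset.sum_congr rfl e1, Finset.sum_add_distrib, ← Finset.mul_sum, ← Finset.mul_sum,
    ← Uu, ← Rr]
  simp; ring

lemma sum_Rr (z d : ℝ) (j : ℕ) :
    ∑ i ∈ range (j+1), (-(z+1))^i * Rr z d (j-i) = Uu z d j := by
  induction j with
  | zero => simp
  | succ j ih =>
    rw [Finset.sum_range_succ']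
    have e1 : ∀ x ∈ range (j+1), (-(z+1))^(x+1) * Rr z d (j+1-(x+1))
        = -(z+1) * ((-(z+1))^x * Rr z d (j-x)) := by
      intro x _
      have : j+1-(x+1) = j-x := by omega
      rw [this]; ring
    rw [Finset.sum_congr rfl e1, ← Finset.mul_sum, ih, Uu_succ]
    norm_num
    rw [Rr_succ]
    ring

lemma RID (z d : ℝ) (j : ℕ) :
    ((j:ℝ)+1) * Rr z d (j+1) = (d - j - 1) * Rr z d j - z * Uu z d j := by
  induction j with
  | zero => rw [Rr_succ]; simp [gchoose_one]; ring
  | succ j ih =>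
    have h1 := Rr_succ z d (j+1)
    have h2 := Uu_succ z d j
    have h0 := Rr_succ z d j
    have habs := gchoose_absorb d (j+1)
    push_cast at habs ⊢
    linear_combination ((j:ℝ)+2) * h1 + z * h2 - (z+1) * ih + habs - (d - j - 1 + z) * h0

lemma Ncl_succ_aux (z u d : ℝ) (j : ℕ) :
    Ncl z u d (j+1) = (∑ i ∈ range j, (-1:ℝ)^i * (z+1)^(i+1) * (u+((i:ℝ)+2)*z+1) * Rr z d (j-1-i))
      - (u+z+1) * Rr z d j := by
  rw [Ncl, Finset.sum_range_succ']
  have e1 : ∀ x ∈ range j, (-1:ℝ)^(x+1+1) * (z+1)^(x+1) * (u+(((x+1:ℕ):ℝ)+1)*z+1) * Rr z d (j+1-1-(x+1))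
      = (-1:ℝ)^x * (z+1)^(x+1) * (u+((x:ℝ)+2)*z+1) * Rr z d (j-1-x) := by
    intro x _
    have h : j+1-1-(x+1) = j-1-x := by omega
    rw [h]; push_cast; ring
  rw [Finset.sum_congr rfl e1]
  norm_num
  ring

lemma Ncl_succ (z u d : ℝ) (j : ℕ) :
    Ncl z u d (j+1) = -(u+z+1) * Rr z d j - (z+1) * Ncl z (u+z) d j := by
  rw [Ncl_succ_aux, Ncl, Finset.mul_sum]
  have e1 : ∀ i ∈ range j, (z+1) * ((-1:ℝ)^(i+1) * (z+1)^i * ((u+z)+((i:ℝ)+1)*z+1) * Rr z d (j-1-i))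
      = -((-1:ℝ)^i * (z+1)^(i+1) * (u+((i:ℝ)+2)*z+1) * Rr z d (j-1-i)) := by
    intro i _; ring
  rw [Finset.sum_congr rfl e1, Finset.sum_neg_distrib]
  ring

lemma TT_eq (z d : ℝ) (j : ℕ) : TT z d j = Uu z d j - Rr z d j := by
  have h := sum_Rr z d j
  rw [Finset.sum_range_succ'] at h
  simp only [Nat.sub_zero, pow_zero, one_mul] at h
  rw [TT]
  have e1 : ∀ i ∈ range j, (-(z+1))^(i+1) * Rr z d (j-1-i) = (-(z+1))^(i+1) * Rr z d (j-(i+1)) := by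
    intro i _; congr 2; omega
  rw [Finset.sum_congr rfl e1]
  linarith [h]

lemma NclT (z u d : ℝ) (j : ℕ) :
    (z+1) * Ncl z u d j + Ncl z u d (j+1) = -(u+z+1) * Rr z d j + (-z) * TT z d j := by
  have hA := Ncl_succ_aux z u d j
  have hsum : (z+1) * Ncl z u d j
      + (∑ i ∈ range j, (-1:ℝ)^i * (z+1)^(i+1) * (u+((i:ℝ)+2)*z+1) * Rr z d (j-1-i))
      = (-z) * TT z d j := by
    rw [Ncl, TT, Finset.mul_sum, Finset.mul_sum, ← Finset.sum_add_distrib]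
    refine Finset.sum_congr rfl fun i _ => ?_
    rw [show (-(z+1):ℝ) = (-1)*(z+1) by ring, mul_pow]
    ring
  linear_combination hA + hsum

lemma final_R (z u d : ℝ) (j : ℕ) :
    ((j:ℝ)+1) * Rr z d (j+1)
      = (u + d - j) * Rr z d j + ((z+1) * Ncl z u d j + Ncl z u d (j+1)) := by
  linear_combination RID z d j - NclT z u d j + z * TT_eq z d j

noncomputable def hh (z u v : ℝ) (j : ℕ) : ℝ :=
  ∑ n ∈ range (j+1), (-1:ℝ)^n * gchoose (u+(n:ℝ)*(z+1)) n * gchoose (v+(n:ℝ)*z) (j-n)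
noncomputable def NN (z u v : ℝ) (j : ℕ) : ℝ :=
  ∑ n ∈ range (j+1), (-1:ℝ)^n * (n:ℝ) * gchoose (u+(n:ℝ)*(z+1)) n * gchoose (v+(n:ℝ)*z) (j-n)

@[simp] lemma hh_zero (z u v : ℝ) : hh z u v 0 = 1 := by simp [hh]
@[simp] lemma NN_zero (z u v : ℝ) : NN z u v 0 = 0 := by simp [NN]

lemma NN_rec (z u v : ℝ) (j : ℕ) :
    NN z u v (j+1) = -(u+z+1) * hh z (u+z) (v+z) j + (-(z+1)) * NN z (u+z) (v+z) j := by
  rw [NN, Finset.sum_range_succ']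
  have e1 : ∀ n ∈ range (j+1),
      (-1:ℝ)^(n+1) * ((n+1:ℕ):ℝ) * gchoose (u+((n+1:ℕ):ℝ)*(z+1)) (n+1) * gchoose (v+((n+1:ℕ):ℝ)*z) (j+1-(n+1))
      = -(u+z+1) * ((-1:ℝ)^n * gchoose ((u+z)+(n:ℝ)*(z+1)) n * gchoose ((v+z)+(n:ℝ)*z) (j-n))
        + (-(z+1)) * ((-1:ℝ)^n * (n:ℝ) * gchoose ((u+z)+(n:ℝ)*(z+1)) n * gchoose ((v+z)+(n:ℝ)*z) (j-n)) := by
    intro n _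
    have hB : gchoose (v+((n+1:ℕ):ℝ)*z) (j+1-(n+1)) = gchoose ((v+z)+(n:ℝ)*z) (j-n) := by
      congr 1
      · push_cast; ring
      · omega
    rw [hB]
    have ha : ((n:ℝ)+1) * gchoose (u+((n+1:ℕ):ℝ)*(z+1)) (n+1)
        = (u+((n+1:ℕ):ℝ)*(z+1)) * gchoose ((u+z)+(n:ℝ)*(z+1)) n := by
      rw [gchoose_absorb']
      congr 1
      push_cast; ring
    push_cast at ha ⊢
    linear_combination ((-1:ℝ)^(n+1) * gchoose ((v+z)+(n:ℝ)*z) (j-n)) * ha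
  rw [Finset.sum_congr rfl e1, Finset.sum_add_distrib, ← Finset.mul_sum, ← Finset.mul_sum,
    ← hh, ← NN]
  simp

lemma hh_NN (z u v : ℝ) (j : ℕ) :
    ((j:ℝ)+1) * hh z u v (j+1)
      = (v - j) * hh z u v j + (z+1) * NN z u v j + NN z u v (j+1) := by
  have key : ((j:ℝ)+1) * hh z u v (j+1) - NN z u v (j+1)
      = (v - j) * hh z u v j + (z+1) * NN z u v j := by
    rw [hh, NN, Finset.mul_sum, ← Finset.sum_sub_distrib, Finset.sum_range_succ]
    have e1 : ∀ n ∈ range (j+1),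
        ((j:ℝ)+1) * ((-1:ℝ)^n * gchoose (u+(n:ℝ)*(z+1)) n * gchoose (v+(n:ℝ)*z) (j+1-n))
          - (-1:ℝ)^n * (n:ℝ) * gchoose (u+(n:ℝ)*(z+1)) n * gchoose (v+(n:ℝ)*z) (j+1-n)
        = (v - j) * ((-1:ℝ)^n * gchoose (u+(n:ℝ)*(z+1)) n * gchoose (v+(n:ℝ)*z) (j-n))
          + (z+1) * ((-1:ℝ)^n * (n:ℝ) * gchoose (u+(n:ℝ)*(z+1)) n * gchoose (v+(n:ℝ)*z) (j-n)) := by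
      intro n hn
      have hnj : n ≤ j := by simpa [Nat.lt_succ_iff] using hn
      have hj1 : j+1-n = (j-n)+1 := by omega
      rw [hj1]
      have ha := gchoose_absorb (v+(n:ℝ)*z) (j-n)
      rw [Nat.cast_sub hnj] at ha
      linear_combination ((-1:ℝ)^n * gchoose (u+(n:ℝ)*(z+1)) n) * ha
    rw [Finset.sum_congr rfl e1, Finset.sum_add_distrib, ← Finset.mul_sum, ← Finset.mul_sum,
      ← hh, ← NN]
    have hlast : ((j:ℝ)+1) * ((-1:ℝ)^(j+1) * gchoose (u+((j+1:ℕ):ℝ)*(z+1)) (j+1) * gchoose (v+((j+1:ℕ):ℝ)*z) (j+1-(j+1)))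
        - (-1:ℝ)^(j+1) * ((j+1:ℕ):ℝ) * gchoose (u+((j+1:ℕ):ℝ)*(z+1)) (j+1) * gchoose (v+((j+1:ℕ):ℝ)*z) (j+1-(j+1)) = 0 := by
      push_cast; ring
    rw [hlast]
    ring
  linarith [key]

theorem main_AA (z : ℝ) : ∀ j, ∀ u v : ℝ,
    hh z u v j = Rr z (v-u) j ∧ NN z u v j = Ncl z u (v-u) j := by
  intro j
  induction j with
  | zero => intro u v; simp
  | succ j ih =>
    intro u v
    have hN : NN z u v (j+1) = Ncl z u (v-u) (j+1) := by
      rw [NN_rec, (ih (u+z) (v+z)).1, (ih (u+z) (v+z)).2,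
        show v+z-(u+z) = v-u by ring, Ncl_succ]
      ring
    refine ⟨?_, hN⟩
    have h2 := hh_NN z u v j
    rw [(ih u v).1, (ih u v).2, hN] at h2
    have h3 := final_R z u (v-u) j
    have hj : ((j:ℝ)+1) ≠ 0 := by positivity
    apply mul_left_cancel₀ hj
    rw [h2, h3]
    ring
/-- triangular sum swap -/
lemma tri_swap (m : ℕ) (f : ℕ → ℕ → ℝ) :
    ∑ n ∈ range (m+1), ∑ k ∈ range (m+1-n), f n k
      = ∑ k ∈ range (m+1), ∑ n ∈ range (m+1-k), f n k := by
  have ext1 : ∀ g : ℕ → ℕ → ℝ, ∀ n ∈ range (m+1),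
      ∑ k ∈ range (m+1-n), g n k = ∑ k ∈ range (m+1), if n + k ≤ m then g n k else 0 := by
    intro g n hn
    rw [Finset.sum_congr rfl (g := fun k => if n + k ≤ m then g n k else 0)
      (fun k hk => by rw [if_pos (by simp at hk hn ⊢; omega)])]
    apply Finset.sum_subset
    · intro k hk; simp at hk ⊢; omega
    · intro k _ hk; rw [if_neg (by simp at hk; omega)]
  rw [Finset.sum_congr rfl (ext1 f), Finset.sum_congr rfl (ext1 (fun k n => f n k))]
  rw [Finset.sum_comm]
  exact Finset.sum_congr rfl fun k _ => Finset.sum_congr rfl fun n _ => by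
    by_cases h : n + k ≤ m
    · rw [if_pos h, if_pos (by omega)]
    · rw [if_neg h, if_neg (by omega)]

lemma Rr_zero_d (z : ℝ) (j : ℕ) : Rr z 0 j = (-(z+1))^j := by
  rw [Rr]
  rw [Finset.sum_eq_single_of_mem j (self_mem_range_succ j)]
  · simp
  · intro i hi hij
    have : j - i ≠ 0 := by simp at hi; omega
    simp [this]

theorem lemA (z x y : ℝ) (m : ℕ) :
    ∑ n ∈ Finset.range (m + 1),
      (-1 : ℝ) ^ n * gchoose (x + y + n * z) (m - n) * gchoose (y + n * (z + 1)) n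
    = Rr z x m := by
  have e1 : ∀ n ∈ range (m+1),
      (-1 : ℝ) ^ n * gchoose (x + y + n * z) (m - n) * gchoose (y + n * (z + 1)) n
      = ∑ k ∈ range (m+1-n), gchoose x k *
          ((-1:ℝ)^n * gchoose (y+(n:ℝ)*(z+1)) n * gchoose (y+(n:ℝ)*z) ((m-k)-n)) := by
    intro n hn
    have hv : gchoose (x + y + (n:ℝ) * z) (m - n)
        = ∑ k ∈ range ((m-n)+1), gchoose x k * gchoose (y+(n:ℝ)*z) ((m-n)-k) := by
      rw [show x + y + (n:ℝ)*z = x + (y + (n:ℝ)*z) by ring, gchoose_vandermonde]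
    rw [hv, Finset.mul_sum, Finset.sum_mul]
    rw [show (m-n)+1 = m+1-n by simp at hn; omega]
    refine Finset.sum_congr rfl fun k hk => ?_
    rw [show (m-n)-k = (m-k)-n by simp at hn hk; omega]
    ring
  rw [Finset.sum_congr rfl e1, tri_swap]
  have e2 : ∀ k ∈ range (m+1),
      ∑ n ∈ range (m+1-k), gchoose x k *
        ((-1:ℝ)^n * gchoose (y+(n:ℝ)*(z+1)) n * gchoose (y+(n:ℝ)*z) ((m-k)-n))
      = gchoose x k * (-(z+1))^(m-k) := by
    intro k hk
    rw [← Finset.mul_sum]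
    congr 1
    rw [show m+1-k = (m-k)+1 by simp at hk; omega]
    have := (main_AA z (m-k) y y).1
    rw [sub_self] at this
    rw [← Rr_zero_d z (m-k), ← this, hh]
  rw [Finset.sum_congr rfl e2]
  rw [Rr, ← Finset.sum_range_reflect (fun i => (-(z+1))^i * gchoose x (m-i)) (m+1)]
  refine Finset.sum_congr rfl fun k hk => ?_
  rw [show m+1-1-k = m-k by omega, show m-(m-k) = k by simp at hk; omega]
  ring
lemma L1 (u v : ℝ) (n i : ℕ) :
    ∑ l ∈ range (n+1), (n.choose l : ℝ) * (l.choose i : ℝ) * u^l * v^(n-l)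
      = (n.choose i : ℝ) * u^i * (u+v)^(n-i) := by
  by_cases hi : i ≤ n
  · have h1 : ∑ l ∈ range (n+1), (n.choose l : ℝ) * (l.choose i : ℝ) * u^l * v^(n-l)
        = ∑ l ∈ Ico i (n+1), (n.choose l : ℝ) * (l.choose i : ℝ) * u^l * v^(n-l) := by
      refine (Finset.sum_subset ?_ ?_).symm
      · intro l hl; rw [Finset.mem_Ico] at hl; rw [Finset.mem_range]; omega
      · intro l hl0 hl
        have : l < i := by simp at hl0 hl; omega
        rw [Nat.choose_eq_zero_of_lt this]; simp
    rw [h1, Finset.sum_Ico_eq_sum_range, show n+1-i = (n-i)+1 by omega, add_pow,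
      Finset.mul_sum]
    refine Finset.sum_congr rfl fun l hl => ?_
    have hl' : l ≤ n - i := by simp at hl; omega
    have ht : (n.choose (i+l)) * ((i+l).choose i) = (n.choose i) * ((n-i).choose l) := by
      have := Nat.choose_mul (n := n) (k := i+l) (s := i) (by omega)
      simpa using this
    have hv : n - (i+l) = (n-i) - l := by omega
    have hu : u^(i+l) = u^i * u^l := pow_add u i l
    rw [hv, hu]
    have hc := congrArg (fun t : ℕ => (t : ℝ)) ht
    push_cast at hc
    linear_combination (u^i * u^l * v^((n-i)-l)) * hc
  · rw [Nat.choose_eq_zero_of_lt (by omega)]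
    simp only [Nat.cast_zero, zero_mul]
    apply Finset.sum_eq_zero; intro l hl
    rw [Nat.choose_eq_zero_of_lt (show l < i by simp at hl; omega)]
    simp

lemma sigma_rec (j : ℕ) :
    ∑ n ∈ range (j+3), (-1:ℝ)^n * ((n.choose (j+2-n)):ℝ) * 4^n
    = -4 * (∑ n ∈ range (j+2), (-1:ℝ)^n * ((n.choose (j+1-n)):ℝ) * 4^n)
      - 4 * (∑ n ∈ range (j+1), (-1:ℝ)^n * ((n.choose (j-n)):ℝ) * 4^n) := by
  rw [Finset.sum_range_succ' (fun n => (-1:ℝ)^n * ((n.choose (j+2-n)):ℝ) * 4^n) (j+2)]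
  rw [Finset.sum_range_succ (fun n => (-1:ℝ)^(n+1) * (((n+1).choose (j+2-(n+1))):ℝ) * 4^(n+1)) (j+1)]
  have e1 : ∀ n ∈ range (j+1), (-1:ℝ)^(n+1) * (((n+1).choose (j+2-(n+1))):ℝ) * 4^(n+1)
      = -4 * ((-1:ℝ)^n * ((n.choose (j-n)):ℝ) * 4^n)
        + -4 * ((-1:ℝ)^n * ((n.choose (j+1-n)):ℝ) * 4^n) := by
    intro n hn
    have h1 : j+2-(n+1) = (j-n)+1 := by simp at hn; omega
    have h2 : j+1-n = (j-n)+1 := by simp at hn; omega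
    rw [h1, Nat.choose_succ_succ, h2]
    push_cast; ring
  rw [Finset.sum_congr rfl e1, Finset.sum_add_distrib, ← Finset.mul_sum, ← Finset.mul_sum]
  rw [Finset.sum_range_succ (fun n => (-1:ℝ)^n * ((n.choose (j+1-n)):ℝ) * 4^n) (j+1)]
  simp only [Nat.sub_self, Nat.choose_zero_right, Nat.choose_self, Nat.cast_one]
  rw [show Nat.choose 0 (j+2-0) = 0 from Nat.choose_eq_zero_of_lt (by omega)]
  push_cast
  ring

lemma sigma_id : ∀ j : ℕ, ∑ n ∈ range (j+1), (-1:ℝ)^n * ((n.choose (j-n)):ℝ) * 4^n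
    = (-1)^j * ((j:ℝ)+1) * 2^j := by
  intro j
  induction j using Nat.twoStepInduction with
  | zero => simp
  | one =>
    rw [Finset.sum_range_succ, Finset.sum_range_one]
    norm_num
  | more j ih1 ih2 =>
    rw [show j+2+1 = j+3 from rfl, sigma_rec, ih1, ih2]
    push_cast; ring
lemma ee (j : ℕ) :
    ∑ n ∈ range (j+1), (-1:ℝ)^n * ((n.choose (j-n)):ℝ) * (2:ℝ)^(n-(j-n))
      = ((j:ℝ)+1) * (-1)^j := by
  have h2 : ((2:ℝ)^j) ≠ 0 := by positivity
  apply mul_left_cancel₀ h2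
  rw [Finset.mul_sum]
  have e1 : ∀ n ∈ range (j+1), (2:ℝ)^j * ((-1:ℝ)^n * ((n.choose (j-n)):ℝ) * (2:ℝ)^(n-(j-n)))
      = (-1:ℝ)^n * ((n.choose (j-n)):ℝ) * 4^n := by
    intro n hn
    by_cases hc : j - n ≤ n
    · have : (2:ℝ)^j * (2:ℝ)^(n-(j-n)) = 4^n := by
        rw [← pow_add, show (4:ℝ) = 2^2 by norm_num, ← pow_mul]
        congr 1
        simp at hn; omega
      linear_combination ((-1:ℝ)^n * ((n.choose (j-n)):ℝ)) * this
    · rw [Nat.choose_eq_zero_of_lt (by omega)]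
      simp
  rw [Finset.sum_congr rfl e1, sigma_id]
  ring

theorem lemB (z x : ℝ) (m : ℕ) :
    ∑ n ∈ Finset.range (m + 1), ∑ l ∈ Finset.range (n + 1),
        (-1 : ℝ)^n * (n.choose l : ℝ) * gchoose (x + l + 1) (m - n) *
          (1 + z)^(n + l) * (1 - z)^(n - l)
      = Uu z (x+1) m := by
  -- Step 1: inner l-sum
  have step1 : ∀ n ∈ range (m+1),
      ∑ l ∈ Finset.range (n + 1), (-1 : ℝ)^n * (n.choose l : ℝ) * gchoose (x + l + 1) (m - n) *
          (1 + z)^(n + l) * (1 - z)^(n - l)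
      = ∑ i ∈ range (m+1-n), (-1:ℝ)^n * (n.choose i : ℝ) * gchoose (x+1) ((m-n)-i) *
          (1+z)^(n+i) * 2^(n-i) := by
    intro n hn
    have ev : ∀ l ∈ range (n+1), (-1 : ℝ)^n * (n.choose l : ℝ) * gchoose (x + l + 1) (m - n) *
          (1 + z)^(n + l) * (1 - z)^(n - l)
        = ∑ i ∈ range (m+1-n), ((-1:ℝ)^n * (1+z)^n * gchoose (x+1) ((m-n)-i)) *
            ((n.choose l : ℝ) * (l.choose i : ℝ) * (1+z)^l * (1-z)^(n-l)) := by
      intro l hl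
      have hv : gchoose (x + (l:ℝ) + 1) (m-n)
          = ∑ i ∈ range ((m-n)+1), (l.choose i : ℝ) * gchoose (x+1) ((m-n)-i) := by
        rw [show x + (l:ℝ) + 1 = (l:ℝ) + (x+1) by ring, gchoose_vandermonde]
        exact Finset.sum_congr rfl fun i _ => by rw [gchoose_natCast]
      rw [hv, show (m-n)+1 = m+1-n by simp at hn; omega, Finset.mul_sum,
        Finset.sum_mul, Finset.sum_mul]
      refine Finset.sum_congr rfl fun i _ => ?_
      rw [pow_add]
      ring
    rw [Finset.sum_congr rfl ev, Finset.sum_comm]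
    refine Finset.sum_congr rfl fun i _ => ?_
    rw [← Finset.mul_sum, L1, show (1+z)+(1-z) = 2 by ring, pow_add]
    ring
  rw [Finset.sum_congr rfl step1]
  -- Step 2: regroup by j = n + i
  have step2 : ∀ n ∈ range (m+1),
      ∑ i ∈ range (m+1-n), (-1:ℝ)^n * (n.choose i : ℝ) * gchoose (x+1) ((m-n)-i) *
          (1+z)^(n+i) * 2^(n-i)
      = ∑ j ∈ range (m+1), (if n ≤ j then
          (-1:ℝ)^n * (n.choose (j-n) : ℝ) * gchoose (x+1) ((m-n)-(j-n)) *
            (1+z)^(n+(j-n)) * 2^(n-(j-n)) else 0) := by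
    intro n hn
    have h1 : ∑ j ∈ Ico n (m+1), (-1:ℝ)^n * (n.choose (j-n) : ℝ) * gchoose (x+1) ((m-n)-(j-n)) *
          (1+z)^(n+(j-n)) * 2^(n-(j-n))
        = ∑ i ∈ range (m+1-n), (-1:ℝ)^n * (n.choose i : ℝ) * gchoose (x+1) ((m-n)-i) *
          (1+z)^(n+i) * 2^(n-i) := by
      rw [Finset.sum_Ico_eq_sum_range]
      exact Finset.sum_congr rfl fun i _ => by rw [show n+i-n = i by omega]
    rw [← h1]
    have hsub : Ico n (m+1) ⊆ range (m+1) := by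
      intro j hj; rw [Finset.mem_Ico] at hj; rw [Finset.mem_range]; omega
    have hz : ∀ j ∈ range (m+1), j ∉ Ico n (m+1) →
        (if n ≤ j then (-1:ℝ)^n * (n.choose (j-n) : ℝ) * gchoose (x+1) ((m-n)-(j-n)) *
            (1+z)^(n+(j-n)) * 2^(n-(j-n)) else 0) = 0 := by
      intro j hj0 hj
      rw [if_neg (by rw [Finset.mem_Ico] at hj; rw [Finset.mem_range] at hj0; omega)]
    have h2 := (Finset.sum_subset hsub hz).symm
    rw [h2]
    refine Finset.sum_congr rfl fun j hj => ?_
    rw [if_pos (Finset.mem_Ico.mp hj).1]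
  rw [Finset.sum_congr rfl step2, Finset.sum_comm]
  -- Step 3: evaluate inner sums
  have step3 : ∀ j ∈ range (m+1),
      ∑ n ∈ range (m+1), (if n ≤ j then
          (-1:ℝ)^n * (n.choose (j-n) : ℝ) * gchoose (x+1) ((m-n)-(j-n)) *
            (1+z)^(n+(j-n)) * 2^(n-(j-n)) else 0)
      = ((j:ℝ)+1) * (-(z+1))^j * gchoose (x+1) (m-j) := by
    intro j hj
    have hsub : range (j+1) ⊆ range (m+1) := by
      intro n hn; rw [Finset.mem_range] at hn ⊢; simp at hj; omega
    have hz : ∀ n ∈ range (m+1), n ∉ range (j+1) →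
        (if n ≤ j then (-1:ℝ)^n * (n.choose (j-n) : ℝ) * gchoose (x+1) ((m-n)-(j-n)) *
            (1+z)^(n+(j-n)) * 2^(n-(j-n)) else 0) = 0 := by
      intro n hn0 hn
      rw [if_neg (by simp at hn; omega)]
    rw [← Finset.sum_subset hsub hz]
    have e4 : ∀ n ∈ range (j+1),
        (if n ≤ j then (-1:ℝ)^n * (n.choose (j-n) : ℝ) * gchoose (x+1) ((m-n)-(j-n)) *
            (1+z)^(n+(j-n)) * 2^(n-(j-n)) else 0)
        = (gchoose (x+1) (m-j) * (1+z)^j) * ((-1:ℝ)^n * (n.choose (j-n) : ℝ) * 2^(n-(j-n))) := by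
      intro n hn
      have hnj : n ≤ j := by simp at hn; omega
      have hjm : j ≤ m := by simp at hj; omega
      rw [if_pos hnj, show (m-n)-(j-n) = m-j by omega, show n+(j-n) = j by omega]
      ring
    rw [Finset.sum_congr rfl e4, ← Finset.mul_sum, ee]
    rw [show (-(z+1):ℝ) = (-1)*(1+z) by ring, mul_pow]
    ring
  rw [Finset.sum_congr rfl step3, Uu]

lemma Rr_pascal (z d : ℝ) (j : ℕ) : Rr z (d+1) (j+1) = Rr z d (j+1) + Rr z d j := by
  have hA : ∑ i ∈ range (j+1), (-(z+1))^i * gchoose d (j+1-i)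
      = Rr z d (j+1) - (-(z+1))^(j+1) := by
    have h0 := Finset.sum_range_succ (fun i => (-(z+1))^i * gchoose d (j+1-i)) (j+1)
    rw [Rr, h0]
    simp
  rw [Rr, Finset.sum_range_succ]
  have e1 : ∀ i ∈ range (j+1), (-(z+1))^i * gchoose (d+1) (j+1-i)
      = (-(z+1))^i * gchoose d (j+1-i) + (-(z+1))^i * gchoose d (j-i) := by
    intro i hi
    rw [show j+1-i = (j-i)+1 by simp at hi; omega, gchoose_pascal]
    ring
  rw [Finset.sum_congr rfl e1, Finset.sum_add_distrib, hA, ← Rr]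
  simp
  ring

lemma final6 (z x : ℝ) (m : ℕ) :
    (x + ((m:ℝ)+1)*z + 1) * Rr z x m = (z+1) * Uu z (x+1) m + (x - m) * gchoose x m := by
  induction m with
  | zero => simp; ring
  | succ m ih =>
    have hf := Rr_succ z x m
    have hg := Uu_succ z (x+1) m
    have hP := Rr_pascal z x m
    have hF := Rr_succ z (x+1) m
    have habs := gchoose_absorb x m
    push_cast
    linear_combination (-(z+1)) * hg + (-(z+1)) * hP + (z+1) * hF
      + (x+((m:ℝ)+1)*z) * hf + (z+1) * habs + (-(z+1)) * ih
end SunWu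

open SunWu in
theorem sun_wu_extension' (m : ℕ) (x y z : ℝ) :
    (x + (m + 1) * z + 1) *
        ∑ n ∈ Finset.range (m + 1),
          (-1 : ℝ) ^ n * gchoose (x + y + n * z) (m - n) * gchoose (y + n * (z + 1)) n =
      (z + 1) * ∑ n ∈ Finset.range (m + 1), ∑ l ∈ Finset.range (n + 1),
            (-1 : ℝ) ^ n * (n.choose l : ℝ) * gchoose (x + l + 1) (m - n) *
              (1 + z) ^ (n + l) * (1 - z) ^ (n - l) +
        (x - m) * gchoose x m := by
  rw [lemA z x y m, lemB z x m]
  exact final6 z x m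
end

section
/- For every natural number m and all real numbers x and y, one has (x+m+2) · Σ_{n=0}^{m} (-1)^n · C(x+y+n, m-n) · C(y+2n, n) = 2 · Σ_{n=0}^{m} C(x+n+1, m-n) · (-4)^n + (x-m) · C(x,m). -/
open Finset PowerSeries

lemma gchoose_zero_succ (k : ℕ) : gchoose 0 (k+1) = 0 := by
  unfold gchoose
  rw [Finset.prod_eq_zero (Finset.mem_range.2 (Nat.succ_pos k)) (by simp)]
  simp

lemma prod_shift (x : ℝ) (k : ℕ) :
    ∏ i ∈ Finset.range (k+1), (x - i) = x * ∏ i ∈ Finset.range k, (x - 1 - i) := by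
  rw [Finset.prod_range_succ']
  simp only [Nat.cast_add, Nat.cast_one, Nat.cast_zero, sub_zero]
  rw [mul_comm]
  congr 1
  exact Finset.prod_congr rfl (fun i _ => by ring)

lemma gchoose_pascal (x : ℝ) (k : ℕ) :
    gchoose x (k+1) = gchoose (x-1) (k+1) + gchoose (x-1) k := by
  unfold gchoose
  rw [div_add_div _ _ (by positivity) (by positivity)]
  rw [div_eq_div_iff (by positivity) (by positivity)]
  rw [prod_shift, Finset.prod_range_succ]
  have h : ∀ i ∈ Finset.range k, (x - 1 - (i:ℝ)) = (x - 1 - i) := fun i _ => rfl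
  push_cast [Nat.factorial_succ]
  ring

lemma gchoose_absorb (x : ℝ) (k : ℕ) :
    ((k:ℝ)+1) * gchoose x (k+1) = (x - k) * gchoose x k := by
  unfold gchoose
  rw [Finset.prod_range_succ, Nat.factorial_succ]
  push_cast
  field_simp

lemma gchoose_shift (x : ℝ) (k : ℕ) :
    x * gchoose (x-1) k = (x - k) * gchoose x k := by
  have h : x * ∏ i ∈ Finset.range k, (x-1-(i:ℝ)) = (x - k) * ∏ i ∈ Finset.range k, (x - i) := by
    rw [← prod_shift, Finset.prod_range_succ]; ring
  unfold gchoose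
  rw [mul_div_assoc', mul_div_assoc', h]

lemma gchoose_central (n : ℕ) :
    ((n:ℝ)+1) * gchoose (2*(n:ℝ)+2) (n+1) = 2*(2*(n:ℝ)+1) * gchoose (2*(n:ℝ)) n := by
  have hn : ((n:ℝ)+1) ≠ 0 := by positivity
  apply mul_left_cancel₀ hn
  have h1 := gchoose_absorb (2*(n:ℝ)+2) n
  have h2 := gchoose_shift (2*(n:ℝ)+2) n
  have h3 := gchoose_shift (2*(n:ℝ)+1) n
  have e2 : (2*(n:ℝ)+2) - 1 = 2*(n:ℝ)+1 := by ring
  have e3 : (2*(n:ℝ)+1) - 1 = 2*(n:ℝ) := by ring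
  rw [e2] at h2; rw [e3] at h3
  nlinarith [h1, h2, h3]

-- polynomial machinery
noncomputable def gcp (k : ℕ) : Polynomial ℝ :=
  Polynomial.C ((Nat.factorial k : ℝ))⁻¹ * ∏ i ∈ Finset.range k, (Polynomial.X - Polynomial.C (i:ℝ))

lemma gcp_eval (k : ℕ) (t : ℝ) : (gcp k).eval t = gchoose t k := by
  simp [gcp, gchoose, Polynomial.eval_prod, div_eq_inv_mul]

lemma gcp_comp_eval (k : ℕ) (a t : ℝ) :
    ((gcp k).comp (Polynomial.X + Polynomial.C a)).eval t = gchoose (t + a) k := by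
  rw [Polynomial.eval_comp]; simp [gcp_eval]

lemma eval_const_of_periodic (p : Polynomial ℝ)
    (h : ∀ x : ℝ, p.eval x = p.eval (x - 1)) (x : ℝ) : p.eval x = p.eval 0 := by
  have hn : ∀ n : ℕ, p.eval (n:ℝ) = p.eval 0 := by
    intro n
    induction n with
    | zero => simp
    | succ k ih =>
      have h2 := h ((k:ℝ)+1)
      rw [show ((k:ℝ)+1) - 1 = (k:ℝ) by ring] at h2
      push_cast
      rw [h2, ih]
  have hq : (p - Polynomial.C (p.eval 0)) = 0 := by
    apply Polynomial.eq_zero_of_infinite_isRoot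
    apply Set.Infinite.mono (s := Set.range ((↑) : ℕ → ℝ))
    · rintro _ ⟨n, rfl⟩
      simp [Polynomial.IsRoot, hn n]
    · exact Set.infinite_range_of_injective Nat.cast_injective
  have := congrArg (Polynomial.eval x) hq
  simp at this
  linarith

noncomputable def Ssum (m : ℕ) (x y : ℝ) : ℝ :=
  ∑ n ∈ Finset.range (m+1), (-1 : ℝ) ^ n * gchoose (x + y + n) (m - n) * gchoose (y + 2 * n) n

noncomputable def gsum (m : ℕ) (x : ℝ) : ℝ :=
  ∑ k ∈ Finset.range (m+1), (-2 : ℝ) ^ k * gchoose x (m - k)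

noncomputable def Tsum (m : ℕ) (x : ℝ) : ℝ :=
  ∑ n ∈ Finset.range (m+1), gchoose (x + n + 1) (m - n) * (-4 : ℝ) ^ n

noncomputable def usum (m : ℕ) : ℝ :=
  ∑ n ∈ Finset.range (m+1), (-4 : ℝ) ^ n * gchoose (n : ℝ) (m - n)

lemma gsum_zero_eq (m : ℕ) : gsum m 0 = (-2 : ℝ)^m := by
  unfold gsum
  rw [Finset.sum_eq_single m]
  · simp [gchoose_zero]
  · intro k hk hne
    have hk' : k < m + 1 := Finset.mem_range.1 hk
    have : m - k ≠ 0 := by omega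
    obtain ⟨j, hj⟩ : ∃ j, m - k = j + 1 := ⟨m - k - 1, by omega⟩
    rw [hj, gchoose_zero_succ, mul_zero]
  · intro h; exact absurd (Finset.self_mem_range_succ m) h

lemma gsum_rec (m : ℕ) (x : ℝ) : gsum (m+1) x = gchoose x (m+1) - 2 * gsum m x := by
  unfold gsum
  rw [Finset.sum_range_succ' (fun k => (-2:ℝ)^k * gchoose x (m+1-k))]
  simp only [pow_succ, pow_zero, one_mul, Nat.sub_zero]
  have : ∀ k ∈ Finset.range (m+1), (-2:ℝ)^k * (-2) * gchoose x (m+1-(k+1))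
      = -2 * ((-2:ℝ)^k * gchoose x (m-k)) := by
    intro k hk
    have : m + 1 - (k+1) = m - k := by omega
    rw [this]; ring
  rw [Finset.sum_congr rfl this, ← Finset.mul_sum]
  ring

lemma gsum_pascal (m : ℕ) (x : ℝ) : gsum (m+1) x = gsum (m+1) (x-1) + gsum m (x-1) := by
  unfold gsum
  rw [Finset.sum_range_succ (fun k => (-2:ℝ)^k * gchoose x (m+1-k)),
      Finset.sum_range_succ (fun k => (-2:ℝ)^k * gchoose (x-1) (m+1-k))]
  have key : ∀ k ∈ Finset.range (m+1), (-2:ℝ)^k * gchoose x (m+1-k)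
      = (-2:ℝ)^k * gchoose (x-1) (m+1-k) + (-2:ℝ)^k * gchoose (x-1) (m-k) := by
    intro k hk
    have hk' : k < m + 1 := Finset.mem_range.1 hk
    have h1 : m + 1 - k = (m - k) + 1 := by omega
    rw [h1, gchoose_pascal]
    ring
  rw [Finset.sum_congr rfl key, Finset.sum_add_distrib]
  simp only [Nat.sub_self, gchoose_zero]
  ring

lemma usum_zero : usum 0 = 1 := by simp [usum, gchoose_zero]

lemma usum_one : usum 1 = -4 := by
  simp [usum, Finset.sum_range_succ, gchoose_zero, gchoose_zero_succ]

lemma usum_rec (m : ℕ) : usum (m+2) = -4 * usum (m+1) - 4 * usum m := by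
  unfold usum
  rw [Finset.sum_range_succ' (fun n => (-4:ℝ)^n * gchoose (n:ℝ) (m+2-n))]
  simp only [Nat.cast_zero, pow_zero, one_mul, Nat.sub_zero, gchoose_zero_succ, mul_zero, add_zero,
    Nat.succ_sub_succ_eq_sub, Nat.cast_add, Nat.cast_one]
  rw [Finset.sum_range_succ, Nat.sub_self, gchoose_zero]
  have key : ∀ k ∈ Finset.range (m+1), (-4:ℝ)^(k+1) * gchoose ((k:ℝ)+1) (m+1-k)
      = -4 * ((-4:ℝ)^k * gchoose (k:ℝ) (m+1-k)) + (-4) * ((-4:ℝ)^k * gchoose (k:ℝ) (m-k)) := by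
    intro k hk
    have hk' : k < m+1 := Finset.mem_range.1 hk
    have h1 : m+1-k = (m-k)+1 := by omega
    rw [h1, gchoose_pascal]
    rw [show ((k:ℝ)+1-1) = (k:ℝ) by ring]
    ring
  rw [Finset.sum_congr rfl key, Finset.sum_add_distrib, ← Finset.mul_sum, ← Finset.mul_sum]
  have hsplit : (∑ n ∈ Finset.range (m+2), (-4:ℝ)^n * gchoose (n:ℝ) (m+1-n))
      = (∑ k ∈ Finset.range (m+1), (-4:ℝ)^k * gchoose (k:ℝ) (m+1-k)) + (-4)^(m+1) := by
    rw [Finset.sum_range_succ, Nat.sub_self, gchoose_zero]; ring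
  rw [hsplit]
  ring

lemma usum_val (m : ℕ) : usum m = ((m:ℝ)+1) * (-2)^m := by
  induction m using Nat.twoStepInduction with
  | zero => simpa using usum_zero
  | one => rw [usum_one]; norm_num
  | more m ih1 ih2 =>
    rw [usum_rec, ih1, ih2]
    push_cast
    ring

noncomputable def bGamma (m : ℕ) (n : ℕ) : ℝ :=
  -(n:ℝ) * (-1)^n * gchoose (2*(n:ℝ)) n * gchoose ((n:ℝ)-1) (m+1-n)

lemma bterm_telescope (m : ℕ) (n : ℕ) (hn : n ≤ m) :
    ((m:ℝ)+1) * ((-1)^n * gchoose (2*(n:ℝ)) n * gchoose (n:ℝ) (m+1-n))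
      + 2*((m:ℝ)+1) * ((-1)^n * gchoose (2*(n:ℝ)) n * gchoose (n:ℝ) (m-n))
      = bGamma m (n+1) - bGamma m n := by
  have hJ : m + 1 - n = (m - n) + 1 := by omega
  have hJ2 : m + 1 - (n+1) = m - n := by omega
  set J := m - n with hJdef
  have hmJ : (m:ℝ) = (n:ℝ) + (J:ℝ) := by
    have : m = n + J := by omega
    rw [this]; push_cast; ring
  unfold bGamma
  rw [hJ, hJ2]
  push_cast
  have hcen := gchoose_central n
  have h1 := gchoose_absorb (n:ℝ) J
  have h2 := gchoose_shift (n:ℝ) (J+1)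
  rw [show (2*((n:ℝ)+1)) = 2*(n:ℝ)+2 by ring]
  rw [hmJ]
  push_cast at h1 h2 ⊢
  rw [show ((n:ℝ)+1-1) = (n:ℝ) by ring]
  linear_combination (-((-1:ℝ)^n) * gchoose (n:ℝ) J) * hcen
    + (-((-1:ℝ)^n) * gchoose (2*(n:ℝ)) n) * h2
    + (2*((-1:ℝ)^n) * gchoose (2*(n:ℝ)) n) * h1

lemma bsum_val (m : ℕ) :
    ∑ n ∈ Finset.range (m+1), (-1:ℝ)^n * gchoose (2*(n:ℝ)) n * gchoose (n:ℝ) (m-n) = (-2)^m := by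
  induction m with
  | zero => simp [gchoose_zero]
  | succ m ih =>
    have hne : ((m:ℝ)+1) ≠ 0 := by positivity
    have hb : ∑ n ∈ Finset.range (m+1+1), (-1:ℝ)^n * gchoose (2*(n:ℝ)) n * gchoose (n:ℝ) (m+1-n)
        = (∑ n ∈ Finset.range (m+1), (-1:ℝ)^n * gchoose (2*(n:ℝ)) n * gchoose (n:ℝ) (m+1-n))
          + (-1:ℝ)^(m+1) * gchoose (2*((m:ℝ)+1)) (m+1) := by
      rw [Finset.sum_range_succ, Nat.sub_self, gchoose_zero]
      push_cast; ring
    have hGlast : bGamma m (m+1) = -((m:ℝ)+1) * (-1:ℝ)^(m+1) * gchoose (2*((m:ℝ)+1)) (m+1) := by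
      unfold bGamma; rw [Nat.sub_self, gchoose_zero]; push_cast; ring
    have hG0 : bGamma m 0 = 0 := by unfold bGamma; simp
    have hsum : ∑ n ∈ Finset.range (m+1),
        (((m:ℝ)+1) * ((-1:ℝ)^n * gchoose (2*(n:ℝ)) n * gchoose (n:ℝ) (m+1-n))
        + 2*((m:ℝ)+1) * ((-1:ℝ)^n * gchoose (2*(n:ℝ)) n * gchoose (n:ℝ) (m-n)))
        = bGamma m (m+1) - bGamma m 0 := by
      rw [Finset.sum_congr rfl (fun n hn => bterm_telescope m n (Nat.lt_succ_iff.1 (Finset.mem_range.1 hn)))]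
      exact Finset.sum_range_sub (bGamma m) (m+1)
    rw [Finset.sum_add_distrib, ← Finset.mul_sum, ← Finset.mul_sum, ih, hGlast, hG0] at hsum
    apply mul_left_cancel₀ hne
    rw [hb]
    linear_combination hsum

lemma Ssum_pascal (m : ℕ) (x y : ℝ) :
    Ssum (m+1) x y = Ssum (m+1) (x-1) y + Ssum m (x-1) y := by
  unfold Ssum
  rw [Finset.sum_range_succ (fun n => (-1:ℝ)^n * gchoose (x + y + n) (m+1-n) * gchoose (y + 2*n) n)]
  rw [Finset.sum_range_succ (fun n => (-1:ℝ)^n * gchoose (x-1 + y + n) (m+1-n) * gchoose (y + 2*n) n)]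
  have key : ∀ n ∈ Finset.range (m+1),
      (-1:ℝ)^n * gchoose (x + y + n) (m+1-n) * gchoose (y + 2*n) n
      = (-1:ℝ)^n * gchoose (x-1 + y + n) (m+1-n) * gchoose (y + 2*n) n
        + (-1:ℝ)^n * gchoose (x-1 + y + n) (m-n) * gchoose (y + 2*n) n := by
    intro n hn
    have hn' : n < m + 1 := Finset.mem_range.1 hn
    have h1 : m+1-n = (m-n)+1 := by omega
    have hp := gchoose_pascal (x + y + (n:ℝ)) (m-n)
    rw [h1, hp, show x + y + (n:ℝ) - 1 = x - 1 + y + n by ring]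
    ring
  rw [Finset.sum_congr rfl key, Finset.sum_add_distrib, Nat.sub_self, gchoose_zero, gchoose_zero]
  ring

lemma Ssum_star (m : ℕ) (x y : ℝ) :
    Ssum (m+1) x y + Ssum m x (y+1) = Ssum (m+1) (x+1) (y-1) := by
  unfold Ssum
  rw [Finset.sum_range_succ' (fun n => (-1:ℝ)^n * gchoose (x + y + n) (m+1-n) * gchoose (y + 2*n) n)]
  rw [Finset.sum_range_succ' (fun n => (-1:ℝ)^n * gchoose (x+1 + (y-1) + n) (m+1-n) * gchoose ((y-1) + 2*n) n)]
  have key : ∀ j ∈ Finset.range (m+1),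
      (-1:ℝ)^(j+1) * gchoose (x + y + ((j+1 : ℕ) : ℝ)) (m+1-(j+1)) * gchoose (y + 2*((j+1 : ℕ) : ℝ)) (j+1)
        + (-1:ℝ)^j * gchoose (x + (y+1) + j) (m-j) * gchoose ((y+1) + 2*j) j
      = (-1:ℝ)^(j+1) * gchoose (x+1 + (y-1) + ((j+1 : ℕ) : ℝ)) (m+1-(j+1)) * gchoose ((y-1) + 2*((j+1 : ℕ) : ℝ)) (j+1) := by
    intro j hj
    have hp := gchoose_pascal (y + 2*(j:ℝ) + 2) j
    simp only [Nat.succ_sub_succ]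
    push_cast
    rw [show y + 2*((j:ℝ)+1) = y + 2*(j:ℝ) + 2 by ring, hp,
        show y + 2*(j:ℝ) + 2 - 1 = y + 2*(j:ℝ)+1 by ring]
    ring_nf
  have hsplit := Finset.sum_congr rfl key
  rw [Finset.sum_add_distrib] at hsplit
  ring_nf at hsplit ⊢
  simp only [gchoose_zero] at *
  ring_nf at ⊢
  have h0 : gchoose (x + 1 + (y - 1) + 0) (1 + m - 0) = gchoose (x + y + 0) (1 + m - 0) := by
    rw [show x + 1 + (y - 1) + 0 = x + y + 0 by ring]
  linear_combination hsplit

lemma Tsum_pascal (m : ℕ) (x : ℝ) :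
    Tsum (m+1) x = Tsum (m+1) (x-1) + Tsum m (x-1) := by
  unfold Tsum
  rw [Finset.sum_range_succ (fun n => gchoose (x + n + 1) (m+1-n) * (-4:ℝ)^n)]
  rw [Finset.sum_range_succ (fun n => gchoose (x-1 + n + 1) (m+1-n) * (-4:ℝ)^n)]
  have key : ∀ n ∈ Finset.range (m+1),
      gchoose (x + n + 1) (m+1-n) * (-4:ℝ)^n
      = gchoose (x-1 + n + 1) (m+1-n) * (-4:ℝ)^n + gchoose (x-1 + n + 1) (m-n) * (-4:ℝ)^n := by
    intro n hn
    have hn' : n < m + 1 := Finset.mem_range.1 hn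
    have h1 : m+1-n = (m-n)+1 := by omega
    have hp := gchoose_pascal (x + (n:ℝ) + 1) (m-n)
    rw [h1, hp, show x + (n:ℝ) + 1 - 1 = x - 1 + n + 1 by ring]
    ring
  rw [Finset.sum_congr rfl key, Finset.sum_add_distrib, Nat.sub_self, gchoose_zero, gchoose_zero]
  ring

lemma Tsum_zero_val (m : ℕ) : Tsum (m+1) 0 = usum (m+1) + usum m := by
  unfold Tsum usum
  rw [Finset.sum_range_succ (fun n => gchoose (0 + n + 1) (m+1-n) * (-4:ℝ)^n)]
  rw [Finset.sum_range_succ (fun n => (-4:ℝ)^n * gchoose (n:ℝ) (m+1-n))]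
  have key : ∀ n ∈ Finset.range (m+1),
      gchoose (0 + n + 1) (m+1-n) * (-4:ℝ)^n
      = (-4:ℝ)^n * gchoose (n:ℝ) (m+1-n) + (-4:ℝ)^n * gchoose (n:ℝ) (m-n) := by
    intro n hn
    have hn' : n < m + 1 := Finset.mem_range.1 hn
    have h1 : m+1-n = (m-n)+1 := by omega
    have hp := gchoose_pascal ((n:ℝ) + 1) (m-n)
    rw [show (0:ℝ) + (n:ℝ) + 1 = (n:ℝ) + 1 by ring, h1, hp,
        show (n:ℝ) + 1 - 1 = (n:ℝ) by ring]
    ring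
  rw [Finset.sum_congr rfl key, Finset.sum_add_distrib, Nat.sub_self, gchoose_zero, gchoose_zero]
  ring

lemma gchoose_one (x : ℝ) : gchoose x 1 = x := by
  simp [gchoose]

noncomputable def PW (M : ℕ) : Polynomial ℝ :=
  Polynomial.C 2 * (∑ n ∈ Finset.range (M+1),
      (gcp (M-n)).comp (Polynomial.X + Polynomial.C ((n:ℝ)+1)) * Polynomial.C ((-4:ℝ)^n))
  - (Polynomial.X - Polynomial.C (M:ℝ)) *
      (∑ k ∈ Finset.range (M+1), Polynomial.C ((-2:ℝ)^k) * gcp (M-k))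
  + Polynomial.C ((M:ℝ)+1) *
      (∑ k ∈ Finset.range (M+1+1), Polynomial.C ((-2:ℝ)^k) * gcp (M+1-k))

lemma PW_eval (M : ℕ) (z : ℝ) :
    (PW M).eval z = 2 * Tsum M z - (z - M) * gsum M z + ((M:ℝ)+1) * gsum (M+1) z := by
  unfold PW Tsum gsum
  simp only [Polynomial.eval_add, Polynomial.eval_sub, Polynomial.eval_mul, Polynomial.eval_C,
    Polynomial.eval_X, Polynomial.eval_finset_sum, gcp_comp_eval, gcp_eval]
  rw [Finset.sum_congr rfl (fun n _ => by
    rw [show z + ((n:ℝ)+1) = z + n + 1 by ring] :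
      ∀ n ∈ Finset.range (M+1), gchoose (z + ((n:ℝ)+1)) (M-n) * (-4:ℝ)^n
        = gchoose (z + n + 1) (M-n) * (-4:ℝ)^n)]

lemma WB (m : ℕ) (x : ℝ) :
    2 * Tsum m x - (x - m) * gsum m x + ((m:ℝ)+1) * gsum (m+1) x = 0 := by
  induction m generalizing x with
  | zero =>
    simp only [Tsum, gsum, Nat.cast_zero, Finset.sum_range_succ, Finset.sum_range_zero]
    simp [gchoose_zero, gchoose_one, gchoose_zero_succ]
    ring
  | succ m ih =>
    have per : ∀ z : ℝ, (PW (m+1)).eval z = (PW (m+1)).eval (z-1) := by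
      intro z
      rw [PW_eval, PW_eval]
      push_cast
      linear_combination 2 * Tsum_pascal m z - (z - (m:ℝ) - 1) * gsum_pascal m z
        + ((m:ℝ)+2) * gsum_pascal (m+1) z + ih (z-1)
    have hx := eval_const_of_periodic (PW (m+1)) per x
    rw [PW_eval, PW_eval] at hx
    have h0 : 2 * Tsum (m+1) 0 - ((0:ℝ) - (m+1:ℕ)) * gsum (m+1) 0 + (((m+1:ℕ):ℝ)+1) * gsum (m+1+1) 0 = 0 := by
      rw [Tsum_zero_val, usum_val, usum_val, gsum_zero_eq, gsum_zero_eq]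
      push_cast
      ring
    rw [h0] at hx
    exact hx

noncomputable def Pg (M : ℕ) : Polynomial ℝ :=
  ∑ k ∈ Finset.range (M+1), Polynomial.C ((-2:ℝ)^k) * gcp (M-k)

lemma Pg_eval (M : ℕ) (z : ℝ) : (Pg M).eval z = gsum M z := by
  unfold Pg gsum
  simp only [Polynomial.eval_finset_sum, Polynomial.eval_mul, Polynomial.eval_C, gcp_eval]

noncomputable def PSX (m : ℕ) (y : ℝ) : Polynomial ℝ :=
  ∑ n ∈ Finset.range (m+1), Polynomial.C ((-1:ℝ)^n * gchoose (y+2*(n:ℝ)) n) *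
    (gcp (m-n)).comp (Polynomial.X + Polynomial.C (y+(n:ℝ)))

lemma PSX_eval (m : ℕ) (y x : ℝ) : (PSX m y).eval x = Ssum m x y := by
  unfold PSX Ssum
  simp only [Polynomial.eval_finset_sum, Polynomial.eval_mul, Polynomial.eval_C, gcp_comp_eval]
  exact Finset.sum_congr rfl (fun n _ => by
    rw [show x + (y + (n:ℝ)) = x + y + n by ring]; ring)

noncomputable def PSY (m : ℕ) (x : ℝ) : Polynomial ℝ :=
  ∑ n ∈ Finset.range (m+1), Polynomial.C ((-1:ℝ)^n) *
    ((gcp (m-n)).comp (Polynomial.X + Polynomial.C (x+(n:ℝ))) *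
     (gcp n).comp (Polynomial.X + Polynomial.C (2*(n:ℝ))))

lemma PSY_eval (m : ℕ) (x y : ℝ) : (PSY m x).eval y = Ssum m x y := by
  unfold PSY Ssum
  simp only [Polynomial.eval_finset_sum, Polynomial.eval_mul, Polynomial.eval_C, gcp_comp_eval]
  exact Finset.sum_congr rfl (fun n _ => by
    rw [show y + (x + (n:ℝ)) = x + y + n by ring, show y + 2*(n:ℝ) = y + 2*(n:ℝ) from rfl]; ring)

lemma SA (m : ℕ) : ∀ x y : ℝ, Ssum m x y = gsum m x := by
  induction m with
  | zero =>
    intro x y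
    simp [Ssum, gsum, gchoose_zero]
  | succ m ih =>
    have hper : ∀ x y : ℝ, Ssum (m+1) x y = Ssum (m+1) x (y-1) := by
      intro x y
      have h1 := Ssum_star m x y
      have h2 := Ssum_pascal m (x+1) (y-1)
      rw [show x+1-1 = x by ring] at h2
      rw [ih x (y+1)] at h1
      rw [ih x (y-1)] at h2
      linarith [h1, h2]
    have hy0 : ∀ x y : ℝ, Ssum (m+1) x y = Ssum (m+1) x 0 := by
      intro x y
      have h := eval_const_of_periodic (PSY (m+1) x)
        (fun z => by rw [PSY_eval, PSY_eval]; exact hper x z) y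
      rwa [PSY_eval, PSY_eval] at h
    have hDper : ∀ z : ℝ, (PSX (m+1) 0 - Pg (m+1)).eval z = (PSX (m+1) 0 - Pg (m+1)).eval (z-1) := by
      intro z
      simp only [Polynomial.eval_sub, PSX_eval, Pg_eval]
      have h1 := Ssum_pascal m z 0
      have h2 := gsum_pascal m z
      rw [ih (z-1) 0] at h1
      linarith [h1, h2]
    have hD0 : Ssum (m+1) 0 0 = gsum (m+1) 0 := by
      rw [gsum_zero_eq]
      rw [← bsum_val (m+1)]
      unfold Ssum
      exact Finset.sum_congr rfl (fun n _ => by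
        rw [show (0:ℝ) + 0 + (n:ℝ) = (n:ℝ) by ring, show (0:ℝ) + 2*(n:ℝ) = 2*(n:ℝ) by ring]
        ring)
    intro x y
    have h := eval_const_of_periodic (PSX (m+1) 0 - Pg (m+1)) hDper x
    simp only [Polynomial.eval_sub, PSX_eval, Pg_eval] at h
    rw [hy0 x y, hD0] at *
    linarith [h]

theorem sun_curious_identity' (m : ℕ) (x y : ℝ) :
    (x + m + 2) *
        ∑ n ∈ Finset.range (m + 1),
          (-1 : ℝ) ^ n * gchoose (x + y + n) (m - n) * gchoose (y + 2 * n) n =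
      2 * (∑ n ∈ Finset.range (m + 1), gchoose (x + n + 1) (m - n) * (-4 : ℝ) ^ n) +
        (x - m) * gchoose x m := by
  show (x + m + 2) * Ssum m x y = 2 * Tsum m x + (x - m) * gchoose x m
  rw [SA m x y]
  have hW := WB m x
  have hrec := gsum_rec m x
  have habs := gchoose_absorb x m
  linear_combination (-1 : ℝ) * hW + ((m:ℝ)+1) * hrec + habs
end
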